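/- arXiv:1101.4759 — 3 statements merged into one kernel-verified Lean document; each statement's English description precedes it below -/
import Mathlib

section
/- Let ρ be a unitary representation of a group G on H, K a subgroup, H^K the K-fixed subspace, and P the orthogonal projection onto H^K. If Θ_m ∈ K is a sequence such that ρ(Θ_m) converges weakly to P, then for all g, h ∈ G the operators P ρ(g Θ_m h) P converge weakly to (P ρ(g) P)(P ρ(h) P). -/
open scoped ComplexInnerProductSpace
open Filter

/-- The submodule of vectors fixed by the subgroup `K` under a unitary
representation `ρ`. -/
def fixedSubmodule {G H : Type*} [Group G] [NormedAddCommGroup H]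
    [InnerProductSpace ℂ H] (ρ : G →* (H ≃ₗᵢ[ℂ] H)) (K : Subgroup G) :
    Submodule ℂ H where
  carrier := {v | ∀ k ∈ K, ρ k v = v}
  add_mem' := by
    intro a b ha hb k hk
    simp [map_add, ha k hk, hb k hk]
  zero_mem' := by
    intro k hk
    simp
  smul_mem' := by
    intro c a ha k hk
    simp [map_smul, ha k hk]

/-- Let `ρ` be a unitary representation of `G` on a complex Hilbert space `H`,
`K ≤ G`, `P` the orthogonal projection onto the `K`-fixed subspace, and
`Θ : ℕ → K` a sequence with `ρ(Θ_m) → P` in the weak operator topology. Then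
for all `g, h ∈ G`, the operators `P ρ(g Θ_m h) P` converge weakly to
`(P ρ(g) P) (P ρ(h) P)`. -/
theorem stmt_3 {G H : Type*} [Group G] [NormedAddCommGroup H]
    [InnerProductSpace ℂ H] [CompleteSpace H]
    (ρ : G →* (H ≃ₗᵢ[ℂ] H)) (K : Subgroup G) (P : H →L[ℂ] H)
    (hPmem : ∀ v : H, P v ∈ fixedSubmodule ρ K)
    (hPfix : ∀ v ∈ fixedSubmodule ρ K, P v = v)
    (hPsa : ContinuousLinearMap.adjoint P = P)
    (Θ : ℕ → G) (hΘK : ∀ m, Θ m ∈ K)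
    (hweak : ∀ x y : H,
      Tendsto (fun m => ⟪ρ (Θ m) x, y⟫) atTop (nhds ⟪P x, y⟫)) :
    ∀ g h : G, ∀ x y : H,
      Tendsto (fun m => ⟪P (ρ (g * Θ m * h) (P x)), y⟫) atTop
        (nhds ⟪P (ρ g (P (ρ h (P x)))), y⟫) := by
  intro g h x y
  have selfadj : ∀ u v : H, ⟪P u, v⟫ = ⟪u, P v⟫ := by
    intro u v
    conv_lhs => rw [← hPsa]
    exact ContinuousLinearMap.adjoint_inner_left P v u
  have unit : ∀ (a : G) (u v : H), ⟪(ρ a) u, v⟫ = ⟪u, (ρ a⁻¹) v⟫ := by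
    intro a u v
    have h1 := (ρ a⁻¹).inner_map_map ((ρ a) u) v
    have h2 : (ρ a⁻¹) ((ρ a) u) = u := by
      have : (ρ a⁻¹) ((ρ a) u) = (ρ (a⁻¹ * a)) u := by
        rw [map_mul]; rfl
      simp [this]
    rw [h2] at h1
    exact h1.symm
  have key : ∀ m, ⟪P (ρ (g * Θ m * h) (P x)), y⟫
      = ⟪(ρ (Θ m)) ((ρ h) (P x)), (ρ g⁻¹) (P y)⟫ := by
    intro m
    rw [selfadj]
    have : (ρ (g * Θ m * h)) (P x) = (ρ g) ((ρ (Θ m)) ((ρ h) (P x))) := by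
      rw [map_mul, map_mul]; rfl
    rw [this, unit]
  have key2 : ⟪P (ρ g (P (ρ h (P x)))), y⟫
      = ⟪P ((ρ h) (P x)), (ρ g⁻¹) (P y)⟫ := by
    rw [selfadj ((ρ g) (P ((ρ h) (P x)))) y, unit, selfadj]
  simp only [key, key2]
  exact hweak _ _
end

section
/- Let g = [[A,B],[C,D]] and g' = [[P,Q],[R,T]] be block matrices over a field with blocks of compatible sizes, and let U, V, U', V' be invertible matrices of appropriate sizes. Then ([[1,0],[0,U]] g [[1,0],[0,V]]) ∘ ([[1,0],[0,U']] g' [[1,0],[0,V']]) equals [[1,0],[0,W]] (g ∘ g') [[1,0],[0,W']] for suitable block-diagonal invertible matrices W = diag(U, 1) (up to permutation of blocks) and W' = diag(V', 1); in particular the ∘-product [[AP,B,AQ],[CP,D,CQ],[R,0,T]] descends to a well-defined operation on equivalence classes of matrices modulo left/right multiplication by matrices of the form [[1,0],[0,orthogonal]]. -/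
open Matrix

/-- The `∘`-product of formula (1.2):
`[[A,B],[C,D]] ∘ [[P,Q],[R,T]] = [[AP,B,AQ],[CP,D,CQ],[R,0,T]]`. -/
noncomputable def circ {β α γ n m : Type*} [Fintype α]
    (A : Matrix β α ℝ) (B : Matrix β n ℝ) (C : Matrix n α ℝ) (D : Matrix n n ℝ)
    (P : Matrix α γ ℝ) (Q : Matrix α m ℝ) (R : Matrix m γ ℝ) (T : Matrix m m ℝ) :
    Matrix (β ⊕ (n ⊕ m)) (γ ⊕ (n ⊕ m)) ℝ :=
  Matrix.fromBlocks (A * P) (Matrix.fromCols B (A * Q))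
    (Matrix.fromRows (C * P) R)
    (Matrix.fromBlocks D (C * Q) 0 T)

/-- Replacing `g = [[A,B],[C,D]]` by `[[1,0],[0,U]] g [[1,0],[0,V]]` and
`g' = [[P,Q],[R,T]]` by `[[1,0],[0,U']] g' [[1,0],[0,V']]` with `U, V, U', V'`
orthogonal changes the product `g ∘ g'` only by left multiplication by
`[[1,0],[0,diag(U,U')]]` and right multiplication by `[[1,0],[0,diag(V,V')]]`;
hence the `∘`-product descends to equivalence classes of matrices modulo
left/right multiplication by matrices `[[1,0],[0,orthogonal]]`. -/
theorem stmt_6 {β α γ n m : Type*}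
    [Fintype β] [Fintype α] [Fintype γ] [Fintype n] [Fintype m]
    [DecidableEq β] [DecidableEq α] [DecidableEq γ] [DecidableEq n] [DecidableEq m]
    (A : Matrix β α ℝ) (B : Matrix β n ℝ) (C : Matrix n α ℝ) (D : Matrix n n ℝ)
    (P : Matrix α γ ℝ) (Q : Matrix α m ℝ) (R : Matrix m γ ℝ) (T : Matrix m m ℝ)
    (U V : Matrix n n ℝ) (U' V' : Matrix m m ℝ)
    (hU : U ∈ Matrix.orthogonalGroup n ℝ) (hV : V ∈ Matrix.orthogonalGroup n ℝ)
    (hU' : U' ∈ Matrix.orthogonalGroup m ℝ)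
    (hV' : V' ∈ Matrix.orthogonalGroup m ℝ) :
    circ A (B * V) (U * C) (U * D * V) P (Q * V') (U' * R) (U' * T * V')
      =
    Matrix.fromBlocks (1 : Matrix β β ℝ) 0 0 (Matrix.fromBlocks U 0 0 U') *
      circ A B C D P Q R T *
      Matrix.fromBlocks (1 : Matrix γ γ ℝ) 0 0 (Matrix.fromBlocks V 0 0 V') := by
  simp [circ, Matrix.fromBlocks_multiply, Matrix.fromCols_mul_fromBlocks, Matrix.fromBlocks_mul_fromRows, Matrix.mul_assoc]
end

section
/- Let g, h be elements of the group GL_fin of infinite matrices over ℝ differing from the identity in finitely many entries, both of the block form [[a,b,0],[c,d,0],[0,0,1_∞]] with respect to a decomposition of sizes α + N + ∞ (i.e., supported in the top-left (α+N) block). Let Θ denote the permutation matrix of block form that swaps the second block (size N+k) with a further disjoint block of size N+k beyond the support. Then the product g Θ h, after conjugation by a permutation fixing the first α coordinates, equals the block matrix [[ap, aq, b, 0],[cp, cq, d, 0],[r, t, 0, 0],[0,0,0,1]] where g = [[a,b],[c,d]], h = [[p,q],[r,t]] in (α+N)-block form — in particular, the double coset of g Θ_m h with respect to the subgroup of permutations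 fixing the first α coordinates is eventually independent of m. -/
open Matrix

section

variable (a n k w : Type*) [Fintype a] [Fintype n] [Fintype k] [Fintype w]
  [DecidableEq a] [DecidableEq n] [DecidableEq k] [DecidableEq w]

/-- An element of `GL_fin` of block form `[[A,B,0],[C,D,0],[0,0,1]]` with respect
to the decomposition `a ⊕ ((n ⊕ k) ⊕ ((n ⊕ k) ⊕ w))` (supported in the
top-left `(a + n)`-block, identity elsewhere). -/
noncomputable def suppMat {a n k w : Type*} [Fintype k] [Fintype n] [Fintype w]
    [DecidableEq n] [DecidableEq k] [DecidableEq w]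
    (A : Matrix a a ℝ) (B : Matrix a n ℝ) (C : Matrix n a ℝ) (D : Matrix n n ℝ) :
    Matrix (a ⊕ ((n ⊕ k) ⊕ ((n ⊕ k) ⊕ w))) (a ⊕ ((n ⊕ k) ⊕ ((n ⊕ k) ⊕ w))) ℝ :=
  Matrix.fromBlocks A
    (Matrix.fromCols (Matrix.fromCols B 0) 0)
    (Matrix.fromRows (Matrix.fromRows C 0) 0)
    (Matrix.fromBlocks (Matrix.fromBlocks D 0 0 1) 0 0 1)

/-- The permutation matrix `Θ` swapping the two `(n ⊕ k)`-blocks and fixing the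
`a`-block and the tail `w`. -/
noncomputable def thetaMat {a n k w : Type*} [Fintype n] [Fintype k] [Fintype w]
    [DecidableEq a] [DecidableEq n] [DecidableEq k] [DecidableEq w] :
    Matrix (a ⊕ ((n ⊕ k) ⊕ ((n ⊕ k) ⊕ w))) (a ⊕ ((n ⊕ k) ⊕ ((n ⊕ k) ⊕ w))) ℝ :=
  Matrix.fromBlocks 1 0 0
    (Matrix.fromBlocks 0 (Matrix.fromCols 1 0)
      (Matrix.fromRows 1 0) (Matrix.fromBlocks 0 0 0 1))

/-- The target block matrix `S = [[ap,aq,b,0],[cp,cq,d,0],[r,t,0,0],[0,0,0,1]]`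
with respect to the decomposition `a ⊕ (n ⊕ (n ⊕ (k ⊕ (k ⊕ w))))`. -/
noncomputable def targetMat {a n k w : Type*} [Fintype a] [Fintype n]
    [DecidableEq n] [DecidableEq k] [DecidableEq w]
    (A : Matrix a a ℝ) (B : Matrix a n ℝ) (C : Matrix n a ℝ) (D : Matrix n n ℝ)
    (P : Matrix a a ℝ) (Q : Matrix a n ℝ) (R : Matrix n a ℝ) (T : Matrix n n ℝ) :
    Matrix (a ⊕ (n ⊕ (n ⊕ (k ⊕ (k ⊕ w))))) (a ⊕ (n ⊕ (n ⊕ (k ⊕ (k ⊕ w))))) ℝ :=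
  Matrix.fromBlocks (A * P)
    (Matrix.fromCols (A * Q) (Matrix.fromCols B 0))
    (Matrix.fromRows (C * P) (Matrix.fromRows R 0))
    (Matrix.fromBlocks (C * Q) (Matrix.fromCols D 0)
      (Matrix.fromRows T 0) (Matrix.fromBlocks 0 0 0 1))

/-- Row reindexing. -/
def eRfun {a n k w : Type*} : (a ⊕ ((n ⊕ k) ⊕ ((n ⊕ k) ⊕ w))) → (a ⊕ (n ⊕ (n ⊕ (k ⊕ (k ⊕ w)))))
  | .inl x => .inl x
  | .inr (.inl (.inl x)) => .inr (.inl x)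
  | .inr (.inl (.inr y)) => .inr (.inr (.inr (.inl y)))
  | .inr (.inr (.inl (.inl x))) => .inr (.inr (.inl x))
  | .inr (.inr (.inl (.inr y))) => .inr (.inr (.inr (.inr (.inl y))))
  | .inr (.inr (.inr z)) => .inr (.inr (.inr (.inr (.inr z))))

def eRinv {a n k w : Type*} : (a ⊕ (n ⊕ (n ⊕ (k ⊕ (k ⊕ w))))) → (a ⊕ ((n ⊕ k) ⊕ ((n ⊕ k) ⊕ w)))
  | .inl x => .inl x
  | .inr (.inl x) => .inr (.inl (.inl x))
  | .inr (.inr (.inl x)) => .inr (.inr (.inl (.inl x)))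
  | .inr (.inr (.inr (.inl y))) => .inr (.inl (.inr y))
  | .inr (.inr (.inr (.inr (.inl y)))) => .inr (.inr (.inl (.inr y)))
  | .inr (.inr (.inr (.inr (.inr z)))) => .inr (.inr (.inr z))

def eREquiv {a n k w : Type*} : (a ⊕ ((n ⊕ k) ⊕ ((n ⊕ k) ⊕ w))) ≃ (a ⊕ (n ⊕ (n ⊕ (k ⊕ (k ⊕ w))))) where
  toFun := eRfun
  invFun := eRinv
  left_inv := by rintro (x|((x|x)|((x|x)|x))) <;> rfl
  right_inv := by rintro (x|(x|(x|(x|(x|x))))) <;> rfl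

/-- Column reindexing: like `eRfun` but the two `k`-blocks are swapped. -/
def eCfun {a n k w : Type*} : (a ⊕ ((n ⊕ k) ⊕ ((n ⊕ k) ⊕ w))) → (a ⊕ (n ⊕ (n ⊕ (k ⊕ (k ⊕ w)))))
  | .inl x => .inl x
  | .inr (.inl (.inl x)) => .inr (.inl x)
  | .inr (.inl (.inr y)) => .inr (.inr (.inr (.inr (.inl y))))
  | .inr (.inr (.inl (.inl x))) => .inr (.inr (.inl x))
  | .inr (.inr (.inl (.inr y))) => .inr (.inr (.inr (.inl y)))
  | .inr (.inr (.inr z)) => .inr (.inr (.inr (.inr (.inr z))))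

def eCinv {a n k w : Type*} : (a ⊕ (n ⊕ (n ⊕ (k ⊕ (k ⊕ w))))) → (a ⊕ ((n ⊕ k) ⊕ ((n ⊕ k) ⊕ w)))
  | .inl x => .inl x
  | .inr (.inl x) => .inr (.inl (.inl x))
  | .inr (.inr (.inl x)) => .inr (.inr (.inl (.inl x)))
  | .inr (.inr (.inr (.inl y))) => .inr (.inr (.inl (.inr y)))
  | .inr (.inr (.inr (.inr (.inl y)))) => .inr (.inl (.inr y))
  | .inr (.inr (.inr (.inr (.inr z)))) => .inr (.inr (.inr z))

def eCEquiv {a n k w : Type*} : (a ⊕ ((n ⊕ k) ⊕ ((n ⊕ k) ⊕ w))) ≃ (a ⊕ (n ⊕ (n ⊕ (k ⊕ (k ⊕ w))))) where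
  toFun := eCfun
  invFun := eCinv
  left_inv := by rintro (x|((x|x)|((x|x)|x))) <;> rfl
  right_inv := by rintro (x|(x|(x|(x|(x|x))))) <;> rfl

/-- For `g = [[a,b,0],[c,d,0],[0,0,1]]`, `h = [[p,q,0],[r,t,0],[0,0,1]]` of
block size `α + N + ∞` and `Θ` the permutation matrix swapping the block of
size `N + k` following the first `α` coordinates with the next disjoint block
of size `N + k`, the product `g Θ h` equals, after permutations of rows and
columns fixing the first `α` coordinates, the block matrix
`[[ap,aq,b,0],[cp,cq,d,0],[r,t,0,0],[0,0,0,1]]`; in particular the double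
coset of `g Θ_m h` is eventually independent of `m`. -/

theorem stmt_19
    (ga : Matrix a a ℝ) (gb : Matrix a n ℝ) (gc : Matrix n a ℝ)
    (gd : Matrix n n ℝ)
    (hp : Matrix a a ℝ) (hq : Matrix a n ℝ) (hr : Matrix n a ℝ)
    (ht : Matrix n n ℝ) :
    ∃ eR eC : (a ⊕ ((n ⊕ k) ⊕ ((n ⊕ k) ⊕ w))) ≃
        (a ⊕ (n ⊕ (n ⊕ (k ⊕ (k ⊕ w))))),
      (∀ i : a, eR (Sum.inl i) = Sum.inl i) ∧
      (∀ i : a, eC (Sum.inl i) = Sum.inl i) ∧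
      suppMat (k := k) (w := w) ga gb gc gd * thetaMat *
          suppMat (k := k) (w := w) hp hq hr ht =
        (targetMat (k := k) (w := w) ga gb gc gd hp hq hr ht).submatrix eR eC := by
  refine ⟨eREquiv, eCEquiv, fun i => rfl, fun i => rfl, ?_⟩
  simp only [suppMat, thetaMat, Matrix.fromBlocks_multiply,
    Matrix.fromCols_mul_fromBlocks, Matrix.fromBlocks_mul_fromRows,
    Matrix.fromRows_mul, Matrix.mul_fromCols,
    Matrix.fromRows_mul_fromCols, Matrix.fromCols_mul_fromRows,
    Matrix.mul_one, Matrix.one_mul, Matrix.mul_zero, Matrix.zero_mul,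
    add_zero, zero_add]
  ext i j
  rcases i with i | ((i | i) | ((i | i) | i)) <;>
    rcases j with j | ((j | j) | ((j | j) | j)) <;>
    simp [targetMat, eREquiv, eCEquiv, eRfun, eCfun, Matrix.submatrix_apply,
      Matrix.add_apply,
      Matrix.fromBlocks_apply₁₁, Matrix.fromBlocks_apply₁₂,
      Matrix.fromBlocks_apply₂₁, Matrix.fromBlocks_apply₂₂,
      Matrix.fromRows_apply_inl, Matrix.fromRows_apply_inr,
      Matrix.fromCols_apply_inl, Matrix.fromCols_apply_inr,
      Matrix.one_apply]

end
end
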